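/- Every signed poset on [n] is isomorphic to a naturally labeled signed poset; that is, for every signed poset P there exists ω ∈ S_n^B such that the identity signed permutation lies in the Jordan–Hölder set of ω^{-1}P. -/

import Mathlib

open Finset Pointwise

noncomputable section
attribute [local instance] Classical.propDecidable

/-- The `i`-th standard unit vector in `ℝ^n`. -/
def ee (n : ℕ) (i : Fin n) : Fin n → ℝ := fun j => if j = i then 1 else 0

/-- Standard inner product on `ℝ^n`. -/
def dot {n : ℕ} (a x : Fin n → ℝ) : ℝ := ∑ i, a i * x i

/-- The type-B root system `B_n`. -/
def Bn (n : ℕ) : Set (Fin n → ℝ) :=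
  {α | (∃ i : Fin n, α = ee n i ∨ α = -ee n i) ∨
       (∃ i j : Fin n, i < j ∧ (α = ee n i + ee n j ∨ α = -ee n i - ee n j ∨
          α = ee n i - ee n j ∨ α = -ee n i + ee n j))}

/-- The set of positive linear combinations of elements of `S`. -/
def PLC {n : ℕ} (S : Set (Fin n → ℝ)) : Set (Fin n → ℝ) :=
  {β | ∃ (m : ℕ) (c : Fin m → ℝ) (v : Fin m → (Fin n → ℝ)),
     (∀ k, 0 < c k) ∧ (∀ k, v k ∈ S) ∧ β = ∑ k, c k • v k}

/-- A signed poset on `[n]`: a subset of `B_n` with antisymmetry, closed under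
positive linear combinations within `B_n`. -/
def IsSignedPoset {n : ℕ} (P : Set (Fin n → ℝ)) : Prop :=
  P ⊆ Bn n ∧ (∀ α ∈ P, -α ∉ P) ∧ (∀ β ∈ Bn n, β ∈ PLC P → β ∈ P)

/-- The signed order cone `K_P`. -/
def orderCone {n : ℕ} (P : Set (Fin n → ℝ)) : Set (Fin n → ℝ) :=
  {x | ∀ α ∈ P, 0 ≤ dot α x}

/-- The signed order polytope `O_P = K_P ∩ [-1,1]^n`. -/
def orderPolytope {n : ℕ} (P : Set (Fin n → ℝ)) : Set (Fin n → ℝ) :=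
  {x | (∀ α ∈ P, 0 ≤ dot α x) ∧ ∀ i, -1 ≤ x i ∧ x i ≤ 1}

/-- A signed permutation on `[n]`, encoded as the underlying permutation `π`
(`π i = |ω(i)|`, zero-indexed) together with the signs (`true` means negative). -/
abbrev SignedPerm (n : ℕ) := Equiv.Perm (Fin n) × (Fin n → Bool)

/-- The sign `ε_i` of a signed permutation. -/
def sgn {n : ℕ} (σ : SignedPerm n) (i : Fin n) : ℝ := if σ.2 i then -1 else 1

/-- The signed permutation `σ` viewed as the point `(σ(1), ..., σ(n)) ∈ ℝ^n`. -/
def spt {n : ℕ} (σ : SignedPerm n) : Fin n → ℝ := fun i => sgn σ i * ((σ.1 i : ℕ) + 1)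

/-- The linear action of a signed permutation on `ℝ^n`, extending
`ω e_i = e_j` if `ω(i) = j` and `ω e_i = -e_j` if `ω(i) = -j`. -/
def sact {n : ℕ} (σ : SignedPerm n) (x : Fin n → ℝ) : Fin n → ℝ :=
  fun j => sgn σ (σ.1.symm j) * x (σ.1.symm j)

/-- The linear action of the inverse signed permutation `σ⁻¹` on `ℝ^n`. -/
def sactInv {n : ℕ} (σ : SignedPerm n) (x : Fin n → ℝ) : Fin n → ℝ :=
  fun i => sgn σ i * x (σ.1 i)

/-- The identity signed permutation. -/
def idSP (n : ℕ) : SignedPerm n := (Equiv.refl (Fin n), fun _ => false)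

/-- The Jordan–Hölder set of a signed poset. -/
def JH {n : ℕ} (P : Set (Fin n → ℝ)) : Set (SignedPerm n) :=
  {σ | ∀ α ∈ P, 0 ≤ dot α (spt σ)}

/-- The value `σ(k)` (as a real number), with the convention `σ(0) = 0`;
here `k` ranges over `0, 1, ..., n`. -/
def svalZ {n : ℕ} (σ : SignedPerm n) : ℕ → ℝ
  | 0 => 0
  | k + 1 => if h : k < n then spt σ ⟨k, h⟩ else 0

/-- The natural descent statistic `natdes(σ) = #{i ∈ {0,...,n-1} : σ(i) > σ(i+1)}`. -/
def natdes {n : ℕ} (σ : SignedPerm n) : ℕ :=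
  ((Finset.range n).filter (fun i => svalZ σ (i + 1) < svalZ σ i)).card

/- ### Auxiliary lemmas -/

lemma dot_add {n : ℕ} (a b w : Fin n → ℝ) : dot (a + b) w = dot a w + dot b w := by
  simp [dot, add_mul, Finset.sum_add_distrib]

lemma dot_neg {n : ℕ} (a w : Fin n → ℝ) : dot (-a) w = -dot a w := by
  simp [dot, neg_mul]

lemma dot_sub {n : ℕ} (a b w : Fin n → ℝ) : dot (a - b) w = dot a w - dot b w := by
  rw [sub_eq_add_neg, dot_add, dot_neg, sub_eq_add_neg]

lemma dot_ee {n : ℕ} (i : Fin n) (w : Fin n → ℝ) : dot (ee n i) w = w i := by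
  simp [dot, ee, ite_mul]

lemma Bn_finite (n : ℕ) : (Bn n).Finite := by
  have hsub : Bn n ⊆ ⋃ i : Fin n, ⋃ j : Fin n,
      ({ee n i, -ee n i, ee n i + ee n j, -ee n i - ee n j, ee n i - ee n j,
        -ee n i + ee n j} : Set (Fin n → ℝ)) := by
    rintro α (⟨i, h | h⟩ | ⟨i, j, _, h | h | h | h⟩)
    · exact Set.mem_iUnion.2 ⟨i, Set.mem_iUnion.2 ⟨i, by simp [h]⟩⟩
    · exact Set.mem_iUnion.2 ⟨i, Set.mem_iUnion.2 ⟨i, by simp [h]⟩⟩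
    · exact Set.mem_iUnion.2 ⟨i, Set.mem_iUnion.2 ⟨j, by simp [h]⟩⟩
    · exact Set.mem_iUnion.2 ⟨i, Set.mem_iUnion.2 ⟨j, by simp [h]⟩⟩
    · exact Set.mem_iUnion.2 ⟨i, Set.mem_iUnion.2 ⟨j, by simp [h]⟩⟩
    · exact Set.mem_iUnion.2 ⟨i, Set.mem_iUnion.2 ⟨j, by simp [h]⟩⟩
  exact Set.Finite.subset
    (Set.finite_iUnion fun i => Set.finite_iUnion fun j => Set.toFinite _) hsub

lemma neg_mem_Bn {n : ℕ} {α : Fin n → ℝ} (h : α ∈ Bn n) : -α ∈ Bn n := by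
  rcases h with ⟨i, h | h⟩ | ⟨i, j, hij, h | h | h | h⟩
  · exact Or.inl ⟨i, Or.inr (by rw [h])⟩
  · exact Or.inl ⟨i, Or.inl (by rw [h]; abel)⟩
  · exact Or.inr ⟨i, j, hij, Or.inr (Or.inl (by rw [h]; abel))⟩
  · exact Or.inr ⟨i, j, hij, Or.inl (by rw [h]; abel)⟩
  · exact Or.inr ⟨i, j, hij, Or.inr (Or.inr (Or.inr (by rw [h]; abel)))⟩
  · exact Or.inr ⟨i, j, hij, Or.inr (Or.inr (Or.inl (by rw [h]; abel)))⟩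

lemma plc_of_finset {n : ℕ} {S : Set (Fin n → ℝ)} {ι : Type*} (t : Finset ι)
    (c : ι → ℝ) (v : ι → Fin n → ℝ) (hc : ∀ k ∈ t, 0 < c k) (hv : ∀ k ∈ t, v k ∈ S) :
    (∑ k ∈ t, c k • v k) ∈ PLC S := by
  classical
  refine ⟨t.card, fun k => c (t.equivFin.symm k), fun k => v (t.equivFin.symm k),
    fun k => hc _ (t.equivFin.symm k).2, fun k => hv _ (t.equivFin.symm k).2, ?_⟩
  rw [← Finset.sum_coe_sort t (fun k => c k • v k)]
  exact (Equiv.sum_comp t.equivFin.symm (fun x : t => c x • v x)).symm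

lemma zero_not_mem_hull {n : ℕ} {P : Set (Fin n → ℝ)} (hP : IsSignedPoset P) :
    (0 : Fin n → ℝ) ∉ convexHull ℝ P := by
  classical
  have hPfin : P.Finite := (Bn_finite n).subset hP.1
  intro h
  rw [hPfin.convexHull_eq] at h
  obtain ⟨w, hw0, hw1, hwc⟩ := h
  rw [Finset.centerMass_eq_of_sum_1 _ _ hw1] at hwc
  simp only [id_eq] at hwc
  set t := hPfin.toFinset.filter (fun y => 0 < w y) with ht
  have hmemP : ∀ y ∈ t, y ∈ P := fun y hy =>
    hPfin.mem_toFinset.1 (Finset.mem_filter.1 hy).1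
  have hwt : ∀ y ∈ t, 0 < w y := fun y hy => (Finset.mem_filter.1 hy).2
  have hzero : ∀ y ∈ hPfin.toFinset, y ∉ t → w y = 0 := by
    intro y hy hyt
    have : ¬ 0 < w y := fun hpos => hyt (Finset.mem_filter.2 ⟨hy, hpos⟩)
    have := hw0 y (hPfin.mem_toFinset.1 hy)
    linarith
  have hsum_t : ∑ y ∈ t, w y • y = 0 := by
    rw [Finset.sum_subset (Finset.filter_subset _ _)
      (fun y hy hyt => by rw [hzero y hy hyt, zero_smul])]
    exact hwc
  have hsumw_t : ∑ y ∈ t, w y = 1 := by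
    rw [Finset.sum_subset (Finset.filter_subset _ _)
      (fun y hy hyt => hzero y hy hyt)]
    exact hw1
  have htne : t.Nonempty := by
    rcases Finset.eq_empty_or_nonempty t with he | hne
    · rw [he] at hsumw_t; simp at hsumw_t
    · exact hne
  obtain ⟨y0, hy0⟩ := htne
  have hy0P : y0 ∈ P := hmemP y0 hy0
  have hy0w : 0 < w y0 := hwt y0 hy0
  have hrep : -y0 = ∑ y ∈ t.erase y0, (w y / w y0) • y := by
    have h1 := Finset.add_sum_erase t (fun y => w y • y) hy0
    rw [hsum_t] at h1
    have h2 : ∑ y ∈ t.erase y0, w y • y = -(w y0 • y0) :=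
      eq_neg_of_add_eq_zero_right h1
    calc -y0 = (w y0)⁻¹ • (-(w y0 • y0)) := by
          rw [smul_neg, inv_smul_smul₀ (ne_of_gt hy0w)]
      _ = (w y0)⁻¹ • ∑ y ∈ t.erase y0, w y • y := by rw [h2]
      _ = ∑ y ∈ t.erase y0, (w y / w y0) • y := by
          rw [Finset.smul_sum]
          exact Finset.sum_congr rfl fun y hy => by rw [smul_smul, div_eq_inv_mul]
  have hPLC : -y0 ∈ PLC P := by
    rw [hrep]
    exact plc_of_finset _ _ _
      (fun y hy => div_pos (hwt y (Finset.mem_of_mem_erase hy)) hy0w)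
      (fun y hy => hmemP y (Finset.mem_of_mem_erase hy))
  have hBnmem : -y0 ∈ Bn n := neg_mem_Bn (hP.1 hy0P)
  exact hP.2.1 y0 hy0P (hP.2.2 _ hBnmem hPLC)

/-- The key real-number inequality: sign/magnitude compatibility. -/
lemma key_ineq {u v U V : ℝ} (huU : 0 < u → U = |U|) (hvV : 0 < v → V = |V|)
    (hmono : |v| < |u| → |V| < |U|) (hle : v ≤ u) (hsum : 0 < u + v) :
    0 ≤ U + V := by
  have hu : 0 < u := by linarith
  have hU : U = |U| := huU hu
  by_cases hV : 0 ≤ V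
  · have : 0 ≤ U := hU ▸ abs_nonneg U
    linarith
  · push_neg at hV
    have hv : ¬ 0 < v := fun h => by
      have := hvV h; have := abs_nonneg V; linarith
    push_neg at hv
    have habs : |v| < |u| := by
      rw [abs_of_nonpos hv, abs_of_pos hu]; linarith
    have hVU := hmono habs
    rw [abs_of_neg hV] at hVU
    linarith [hU.ge, hU.le]

lemma key_ineq2 {u v U V : ℝ} (huU : 0 < u → U = |U|) (hvV : 0 < v → V = |V|)
    (hm1 : |v| < |u| → |V| < |U|) (hm2 : |u| < |v| → |U| < |V|)
    (hsum : 0 < u + v) : 0 ≤ U + V := by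
  rcases le_total v u with h | h
  · exact key_ineq huU hvV hm1 h hsum
  · rw [add_comm]; exact key_ineq hvV huU hm2 h (by linarith)

/-- every signed poset is isomorphic to a naturally labeled one:
there is `ω ∈ S_n^B` with `id ∈ JH(ω⁻¹ P)`. -/
theorem stmt5 {n : ℕ} (P : Set (Fin n → ℝ)) (hP : IsSignedPoset P) :
    ∃ σ : SignedPerm n, idSP n ∈ JH (sactInv σ '' P) := by
  classical
  -- Step 1: strict separation gives x with ⟨α, x⟩ > 0 for all α ∈ P.
  have hPfin : P.Finite := (Bn_finite n).subset hP.1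
  obtain ⟨f, u, hu0, hub⟩ := geometric_hahn_banach_point_closed
    (convex_convexHull ℝ P) (hPfin.isCompact_convexHull (𝕜 := ℝ)).isClosed (zero_not_mem_hull hP)
  set x : Fin n → ℝ := fun i => f (ee n i) with hxdef
  have hx : ∀ α ∈ P, 0 < dot α x := by
    intro α hα
    have hrep : α = ∑ i, α i • ee n i := by
      funext j
      simp [ee, Finset.sum_apply, mul_ite]
    have hfα : f α = dot α x := by
      conv_lhs => rw [hrep]
      rw [map_sum]
      simp [dot, hxdef]
    have h0 : f 0 = 0 := map_zero f
    have := hub α (subset_convexHull ℝ P hα)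
    rw [hfα] at this
    rw [h0] at hu0
    linarith
  -- Step 2: build the signed permutation by sorting |x|.
  set g : Fin n → ℝ := fun i => |x i| with hgdef
  set τ : Equiv.Perm (Fin n) := Tuple.sort g with hτdef
  refine ⟨(τ, fun j => decide (x (τ j) < 0)), ?_⟩
  intro β hβ
  obtain ⟨α, hαP, rfl⟩ := hβ
  set y : Fin n → ℝ := fun k => (if x k < 0 then (-1 : ℝ) else 1) * ((τ.symm k : ℕ) + 1)
    with hydef
  -- the key dot-product identity
  have hdot : dot (sactInv (τ, fun j => decide (x (τ j) < 0)) α) (spt (idSP n))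
      = dot α y := by
    rw [dot, dot]
    rw [← Equiv.sum_comp τ.symm
      (fun j => (sactInv (τ, fun j => decide (x (τ j) < 0)) α) j * (spt (idSP n) j))]
    refine Finset.sum_congr rfl fun k _ => ?_
    simp only [sactInv, sgn, spt, idSP, hydef, Equiv.apply_symm_apply,
      decide_eq_true_eq]
    simp only [Equiv.refl_apply]
    ring_nf
    rcases lt_or_ge (x k) 0 with h | h <;> simp [h]
  rw [hdot]
  -- sign and magnitude facts about y
  have habs : ∀ k, |y k| = ((τ.symm k : ℕ) + 1 : ℝ) := by
    intro k
    rw [hydef]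
    dsimp only
    rcases lt_or_ge (x k) 0 with h | h
    · rw [if_pos h, neg_one_mul, abs_neg]
      exact abs_of_nonneg (by positivity)
    · rw [if_neg (not_lt.2 h), one_mul]
      exact abs_of_nonneg (by positivity)
  have hpos : ∀ k, 0 < x k → y k = |y k| := by
    intro k hk
    rw [habs k, hydef]
    simp [not_lt.2 hk.le]
  have hneg : ∀ k, x k < 0 → -y k = |-y k| := by
    intro k hk
    rw [abs_neg, habs k, hydef]
    simp [hk]
  have hmono : ∀ i j : Fin n, |x j| < |x i| → |y j| < |y i| := by
    intro i j hij
    rw [habs, habs]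
    have hnat : (τ.symm j : ℕ) < (τ.symm i : ℕ) := by
      by_contra hcon
      push_neg at hcon
      have hle : τ.symm i ≤ τ.symm j := by
        exact_mod_cast hcon
      have := Tuple.monotone_sort g hle
      change g (τ (τ.symm i)) ≤ g (τ (τ.symm j)) at this
      simp only [Function.comp_apply, Equiv.apply_symm_apply, hgdef] at this
      exact absurd hij (not_lt.2 this)
    have : ((τ.symm j : ℕ) : ℝ) < ((τ.symm i : ℕ) : ℝ) := by exact_mod_cast hnat
    linarith
  -- Step 3: case analysis over the root forms.
  have hα := hx α hαP
  rcases hP.1 hαP with ⟨i, h | h⟩ | ⟨i, j, hij, h | h | h | h⟩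
  · subst h
    rw [dot_ee] at hα ⊢
    have := hpos i hα
    rw [this]
    exact abs_nonneg _
  · subst h
    rw [dot_neg, dot_ee] at hα ⊢
    have hxi : x i < 0 := by linarith
    have := hneg i hxi
    have := abs_nonneg (-(y i))
    linarith [hneg i hxi, abs_nonneg (-(y i))]
  · subst h
    rw [dot_add, dot_ee, dot_ee] at hα ⊢
    exact key_ineq2 (u := x i) (v := x j) (U := y i) (V := y j) (hpos i) (hpos j) (hmono i j) (hmono j i) hα
  · subst h
    rw [dot_sub, dot_neg, dot_ee, dot_ee] at hα ⊢
    have := key_ineq2 (u := -x i) (v := -x j) (U := -y i) (V := -y j) (fun h => hneg i (by linarith)) (fun h => hneg j (by linarith))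
      (by rw [abs_neg, abs_neg, abs_neg, abs_neg]; exact hmono i j)
      (by rw [abs_neg, abs_neg, abs_neg, abs_neg]; exact hmono j i)
      (by linarith : 0 < -x i + -x j)
    linarith
  · subst h
    rw [dot_sub, dot_ee, dot_ee] at hα ⊢
    have := key_ineq2 (u := x i) (v := -x j) (U := y i) (V := -y j) (hpos i) (fun h => hneg j (by linarith))
      (by rw [abs_neg, abs_neg]; exact hmono i j)
      (by rw [abs_neg, abs_neg]; exact hmono j i)
      (by linarith : 0 < x i + -x j)
    linarith
  · subst h
    rw [dot_add, dot_neg, dot_ee, dot_ee] at hα ⊢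
    have := key_ineq2 (u := -x i) (v := x j) (U := -y i) (V := y j) (fun h => hneg i (by linarith)) (hpos j)
      (by rw [abs_neg, abs_neg]; exact hmono i j)
      (by rw [abs_neg, abs_neg]; exact hmono j i)
      (by linarith : 0 < -x i + x j)
    linarith
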